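/- Let X, Y, Z be real Banach spaces and let A : X → Z and B : Y → Z be continuous linear operators. Define A ⊕ B : X × Y → Z by (A ⊕ B)(x, y) = A x + B y. If A is Fredholm and A ⊕ B is surjective, then the restriction Π of the natural projection X × Y → Y to the closed subspace Ker(A ⊕ B) is a Fredholm operator with Index(Π) = Index(A). -/

import Mathlib

/-- A continuous linear operator between topological real modules is **Fredholm** if its kernel
is finite-dimensional and its image is closed and of finite codimension. -/
def IsFredholm {E F : Type*} [AddCommGroup E] [Module ℝ E] [TopologicalSpace E]
    [AddCommGroup F] [Module ℝ F] [TopologicalSpace F] (T : E →L[ℝ] F) : Prop :=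
  FiniteDimensional ℝ (LinearMap.ker (T : E →ₗ[ℝ] F)) ∧
    IsClosed ((LinearMap.range (T : E →ₗ[ℝ] F) : Submodule ℝ F) : Set F) ∧
    FiniteDimensional ℝ (F ⧸ LinearMap.range (T : E →ₗ[ℝ] F))

/-- The **index** of a (Fredholm) operator: `dim ker T - dim coker T`. -/
noncomputable def fredholmIndex {E F : Type*} [AddCommGroup E] [Module ℝ E] [TopologicalSpace E]
    [AddCommGroup F] [Module ℝ F] [TopologicalSpace F] (T : E →L[ℝ] F) : ℤ :=
  (Module.finrank ℝ (LinearMap.ker (T : E →ₗ[ℝ] F)) : ℤ) - (Module.finrank ℝ (F ⧸ LinearMap.range (T : E →ₗ[ℝ] F)) : ℤ)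

section Aux

variable {X Y Z : Type*} [NormedAddCommGroup X] [NormedSpace ℝ X]
    [NormedAddCommGroup Y] [NormedSpace ℝ Y]
    [NormedAddCommGroup Z] [NormedSpace ℝ Z]
    (A : X →L[ℝ] Z) (B : Y →L[ℝ] Z)

/-- ker Π ≃ ker A -/
noncomputable def kerPiEquiv :
    (LinearMap.ker ((ContinuousLinearMap.snd ℝ X Y).comp
        (LinearMap.ker (A.coprod B : X × Y →ₗ[ℝ] Z)).subtypeL : LinearMap.ker (A.coprod B : X × Y →ₗ[ℝ] Z) →ₗ[ℝ] Y)) ≃ₗ[ℝ] LinearMap.ker (A : X →ₗ[ℝ] Z) where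
  toFun p := ⟨(p.1 : X × Y).1, by
    have h2 : (p.1 : X × Y).2 = 0 := p.2
    have h1 : A (p.1 : X × Y).1 + B (p.1 : X × Y).2 = 0 := p.1.2
    rw [h2, map_zero, add_zero] at h1
    exact h1⟩
  map_add' p q := rfl
  map_smul' c p := rfl
  invFun x := ⟨⟨(x.1, 0), by
      simp [LinearMap.mem_ker, x.2]⟩, by
    simp [LinearMap.mem_ker]⟩
  left_inv p := by
    ext
    · rfl
    · exact (p.2 : (p.1 : X × Y).2 = 0).symm
  right_inv x := rfl

theorem rangePi_eq :
    LinearMap.range ((ContinuousLinearMap.snd ℝ X Y).comp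
        (LinearMap.ker (A.coprod B : X × Y →ₗ[ℝ] Z)).subtypeL : LinearMap.ker (A.coprod B : X × Y →ₗ[ℝ] Z) →ₗ[ℝ] Y) =
      (LinearMap.range (A : X →ₗ[ℝ] Z)).comap (B : Y →ₗ[ℝ] Z) := by
  ext y
  constructor
  · rintro ⟨⟨⟨x, y'⟩, hk⟩, rfl⟩
    simp only [LinearMap.mem_ker, ContinuousLinearMap.coe_coe,
      ContinuousLinearMap.coprod_apply] at hk
    refine ⟨-x, ?_⟩
    simp only [map_neg]
    exact neg_eq_of_add_eq_zero_right hk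
  · rintro ⟨x, hx⟩
    refine ⟨⟨(-x, y), ?_⟩, rfl⟩
    simp [LinearMap.mem_ker]
    exact neg_add_eq_zero.mpr hx

end Aux

section Aux2

variable {X Y Z : Type*} [NormedAddCommGroup X] [NormedSpace ℝ X]
    [NormedAddCommGroup Y] [NormedSpace ℝ Y]
    [NormedAddCommGroup Z] [NormedSpace ℝ Z]
    (A : X →L[ℝ] Z) (B : Y →L[ℝ] Z)

noncomputable def quotEquivAux (hsurj : Function.Surjective (A.coprod B)) :
    (Y ⧸ (LinearMap.range (A : X →ₗ[ℝ] Z)).comap (B : Y →ₗ[ℝ] Z)) ≃ₗ[ℝ] (Z ⧸ LinearMap.range (A : X →ₗ[ℝ] Z)) := by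
  refine LinearEquiv.ofBijective
    (Submodule.mapQ ((LinearMap.range (A : X →ₗ[ℝ] Z)).comap (B : Y →ₗ[ℝ] Z)) (LinearMap.range (A : X →ₗ[ℝ] Z))
      (B : Y →ₗ[ℝ] Z) le_rfl) ⟨?_, ?_⟩
  · intro a b hab
    obtain ⟨a, rfl⟩ := Submodule.Quotient.mk_surjective _ a
    obtain ⟨b, rfl⟩ := Submodule.Quotient.mk_surjective _ b
    rw [Submodule.mapQ_apply, Submodule.mapQ_apply, Submodule.Quotient.eq] at hab
    rw [Submodule.Quotient.eq]
    exact Submodule.mem_comap.2 (by simpa using hab)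
  · intro z
    obtain ⟨z, rfl⟩ := Submodule.Quotient.mk_surjective _ z
    obtain ⟨⟨x, y⟩, hxy⟩ := hsurj z
    refine ⟨Submodule.Quotient.mk y, ?_⟩
    rw [Submodule.mapQ_apply]
    rw [Submodule.Quotient.eq]
    exact ⟨-x, by simp only [ContinuousLinearMap.coprod_apply] at hxy; simp [← hxy]⟩

end Aux2

set_option maxHeartbeats 1000000 in
set_option synthInstance.maxHeartbeats 1000000 in
/-- **Lemma 1.3 (i).** Let `X, Y, Z` be real Banach spaces, `A : X → Z`, `B : Y → Z` continuous
linear, and `(A ⊕ B)(x, y) = A x + B y`. If `A` is Fredholm and `A ⊕ B` is surjective, then the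
restriction `Π` of the projection `X × Y → Y` to `Ker (A ⊕ B)` is Fredholm with
`Index Π = Index A`. -/
theorem fredholm_projection_of_ker_coprod
    {X Y Z : Type*} [NormedAddCommGroup X] [NormedSpace ℝ X] [CompleteSpace X]
    [NormedAddCommGroup Y] [NormedSpace ℝ Y] [CompleteSpace Y]
    [NormedAddCommGroup Z] [NormedSpace ℝ Z] [CompleteSpace Z]
    (A : X →L[ℝ] Z) (B : Y →L[ℝ] Z)
    (hA : IsFredholm A) (hsurj : Function.Surjective (A.coprod B)) :
    IsFredholm ((ContinuousLinearMap.snd ℝ X Y).comp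
        (LinearMap.ker (A.coprod B : X × Y →ₗ[ℝ] Z)).subtypeL) ∧
      fredholmIndex ((ContinuousLinearMap.snd ℝ X Y).comp
        (LinearMap.ker (A.coprod B : X × Y →ₗ[ℝ] Z)).subtypeL) = fredholmIndex A := by
  obtain ⟨hA1, hA2, hA3⟩ := hA
  have hker := kerPiEquiv A B
  have hrange := rangePi_eq A B
  have hq : (Y ⧸ LinearMap.range ((ContinuousLinearMap.snd ℝ X Y).comp (LinearMap.ker (A.coprod B : X × Y →ₗ[ℝ] Z)).subtypeL : LinearMap.ker (A.coprod B : X × Y →ₗ[ℝ] Z) →ₗ[ℝ] Y)) ≃ₗ[ℝ] (Z ⧸ LinearMap.range (A : X →ₗ[ℝ] Z)) :=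
    (Submodule.quotEquivOfEq _ _ hrange).trans (quotEquivAux A B hsurj)
  have fd1 : FiniteDimensional ℝ (LinearMap.ker ((ContinuousLinearMap.snd ℝ X Y).comp (LinearMap.ker (A.coprod B : X × Y →ₗ[ℝ] Z)).subtypeL : LinearMap.ker (A.coprod B : X × Y →ₗ[ℝ] Z) →ₗ[ℝ] Y)) := hker.symm.finiteDimensional
  have fd2 : FiniteDimensional ℝ (Y ⧸ LinearMap.range ((ContinuousLinearMap.snd ℝ X Y).comp (LinearMap.ker (A.coprod B : X × Y →ₗ[ℝ] Z)).subtypeL : LinearMap.ker (A.coprod B : X × Y →ₗ[ℝ] Z) →ₗ[ℝ] Y)) := hq.symm.finiteDimensional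
  have hcl : IsClosed ((LinearMap.range ((ContinuousLinearMap.snd ℝ X Y).comp (LinearMap.ker (A.coprod B : X × Y →ₗ[ℝ] Z)).subtypeL : LinearMap.ker (A.coprod B : X × Y →ₗ[ℝ] Z) →ₗ[ℝ] Y) : Submodule ℝ Y) : Set Y) := by
    rw [hrange]
    exact hA2.preimage B.continuous
  refine ⟨⟨fd1, hcl, fd2⟩, ?_⟩
  unfold fredholmIndex
  rw [hker.finrank_eq, hq.finrank_eq]
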